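/- Let θ_1,…,θ_M ≥ 0, θ_c = Σᵢθᵢ, 0 ≤ ρΔtθ_c ≤ 1, and square-integrable random variables u_c, u_1,…,u_M, together with a random variable ΔW independent of all of them with E[ΔW] = 0 and E[ΔW²] = Δt. If u^{new} = (1−ρΔtθ_c)u_c + ρΔt Σᵢ θᵢuᵢ + μ u_c ΔW, then E[(u^{new})²] ≤ (1 + μ²Δt)·max(E[u_c²], max_i E[uᵢ²]). -/

import Mathlib

open MeasureTheory ProbabilityTheory

lemma l2_mul_integrable {Ω : Type*} [MeasureSpace Ω] [IsProbabilityMeasure (ℙ : Measure Ω)]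
    {f g : Ω → ℝ} (hf : MemLp f 2 ℙ) (hg : MemLp g 2 ℙ) :
    Integrable (fun ω => f ω * g ω) ℙ := by
  have : MemLp (f • g) 1 ℙ := MemLp.smul hg hf
    (hpqr := ⟨by simp only [one_div, inv_one, ENNReal.inv_two_add_inv_two]⟩)
  exact memLp_one_iff_integrable.mp this

theorem stmt_16 {Ω : Type*} [MeasureSpace Ω] [IsProbabilityMeasure (ℙ : Measure Ω)]
    (M : ℕ) (hM : 0 < M) (θ : Fin M → ℝ) (hθ : ∀ i, 0 ≤ θ i)
    (ρ Δt μ : ℝ) (hρ : 0 ≤ ρ) (hΔt : 0 ≤ Δt) (hcfl : ρ * Δt * (∑ i, θ i) ≤ 1)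
    (uc : Ω → ℝ) (u : Fin M → Ω → ℝ) (ΔW : Ω → ℝ)
    (huc : MemLp uc 2 ℙ) (hu : ∀ i, MemLp (u i) 2 ℙ) (hW : MemLp ΔW 2 ℙ)
    (hind : IndepFun (fun ω => (uc ω, fun i => u i ω)) ΔW ℙ)
    (hmean : ∫ ω, ΔW ω = 0) (hvar : ∫ ω, (ΔW ω) ^ 2 = Δt)
    (unew : Ω → ℝ)
    (hunew : ∀ ω, unew ω =
      (1 - ρ * Δt * (∑ i, θ i)) * uc ω + ρ * Δt * (∑ i, θ i * u i ω) + μ * uc ω * ΔW ω) :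
    ∫ ω, (unew ω) ^ 2 ≤
      (1 + μ ^ 2 * Δt) *
        max (∫ ω, (uc ω) ^ 2)
          (Finset.univ.sup' (Finset.univ_nonempty_iff.mpr (Fin.pos_iff_nonempty.mp hM))
            fun i => ∫ ω, (u i ω) ^ 2) := by
  set a := ρ * Δt * (∑ i, θ i) with ha
  have ha0 : 0 ≤ a := by
    apply mul_nonneg (mul_nonneg hρ hΔt)
    exact Finset.sum_nonneg fun i _ => hθ i
  have ha1 : a ≤ 1 := hcfl
  set K := max (∫ ω, (uc ω) ^ 2)
      (Finset.univ.sup' (Finset.univ_nonempty_iff.mpr (Fin.pos_iff_nonempty.mp hM))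
        fun i => ∫ ω, (u i ω) ^ 2) with hK
  set D : Ω → ℝ := fun ω => (1 - a) * uc ω + ρ * Δt * (∑ i, θ i * u i ω) with hD
  -- Memℒp facts
  have hsum : MemLp (fun ω => ∑ i, θ i * u i ω) 2 ℙ :=
    memLp_finset_sum Finset.univ fun i _ => (hu i).const_mul (θ i)
  have hDmem : MemLp D 2 ℙ := by
    apply MemLp.add
    · exact huc.const_mul _
    · exact hsum.const_mul _
  have hD2 : Integrable (fun ω => D ω ^ 2) ℙ := hDmem.integrable_sq
  have huc2 : Integrable (fun ω => uc ω ^ 2) ℙ := huc.integrable_sq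
  have hW1 : Integrable ΔW ℙ := hW.integrable one_le_two
  have hW2 : Integrable (fun ω => ΔW ω ^ 2) ℙ := hW.integrable_sq
  have hDuc : Integrable (fun ω => D ω * uc ω) ℙ := l2_mul_integrable hDmem huc
  -- independence of composed functions
  have hindDuc : IndepFun (fun ω => D ω * uc ω) ΔW ℙ := by
    have hmeas : Measurable (fun p : ℝ × (Fin M → ℝ) =>
        ((1 - a) * p.1 + ρ * Δt * (∑ i, θ i * p.2 i)) * p.1) := by
      fun_prop
    exact hind.comp hmeas measurable_id
  have hinduc2 : IndepFun (fun ω => uc ω ^ 2) (fun ω => ΔW ω ^ 2) ℙ := by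
    have hmeas : Measurable (fun p : ℝ × (Fin M → ℝ) => p.1 ^ 2) := by fun_prop
    exact hind.comp hmeas (measurable_id.pow_const 2)
  have hcross : ∫ ω, D ω * uc ω * ΔW ω = 0 := by
    have := hindDuc.integral_mul_eq_mul_integral hDuc.aestronglyMeasurable hW1.aestronglyMeasurable
    simp only [Pi.mul_apply] at this
    rw [show (fun ω => D ω * uc ω * ΔW ω) =
      (fun ω => D ω * uc ω) * ΔW from rfl] at *
    rw [this, hmean, mul_zero]
  have hnoise : ∫ ω, uc ω ^ 2 * ΔW ω ^ 2 = (∫ ω, uc ω ^ 2) * Δt := by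
    have := hinduc2.integral_mul_eq_mul_integral huc2.aestronglyMeasurable hW2.aestronglyMeasurable
    rw [show (fun ω => uc ω ^ 2 * ΔW ω ^ 2) =
      (fun ω => uc ω ^ 2) * (fun ω => ΔW ω ^ 2) from rfl]
    rw [this, hvar]
  -- integrability of cross/noise terms
  have hcrossint : Integrable (fun ω => D ω * uc ω * ΔW ω) ℙ := by
    have := hindDuc.integrable_mul hDuc hW1
    exact this
  have hnoiseint : Integrable (fun ω => uc ω ^ 2 * ΔW ω ^ 2) ℙ := by
    have := hinduc2.integrable_mul huc2 hW2
    exact this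
  -- expansion
  have hexp : ∀ ω, unew ω ^ 2 =
      D ω ^ 2 + (2 * μ) * (D ω * uc ω * ΔW ω) + μ ^ 2 * (uc ω ^ 2 * ΔW ω ^ 2) := by
    intro ω; rw [hunew ω]; simp only [hD]; ring
  have hint : ∫ ω, unew ω ^ 2 =
      (∫ ω, D ω ^ 2) + μ ^ 2 * Δt * (∫ ω, uc ω ^ 2) := by
    calc ∫ ω, unew ω ^ 2
        = ∫ ω, (D ω ^ 2 + (2 * μ) * (D ω * uc ω * ΔW ω) + μ ^ 2 * (uc ω ^ 2 * ΔW ω ^ 2)) := by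
          congr 1; funext ω; exact hexp ω
      _ = (∫ ω, D ω ^ 2) + (2 * μ) * (∫ ω, D ω * uc ω * ΔW ω)
            + μ ^ 2 * (∫ ω, uc ω ^ 2 * ΔW ω ^ 2) := by
          have hAB : Integrable (fun ω => D ω ^ 2 + 2 * μ * (D ω * uc ω * ΔW ω)) ℙ :=
            hD2.add (hcrossint.const_mul _)
          have hC : Integrable (fun ω => μ ^ 2 * (uc ω ^ 2 * ΔW ω ^ 2)) ℙ :=
            hnoiseint.const_mul _
          have hB : Integrable (fun ω => 2 * μ * (D ω * uc ω * ΔW ω)) ℙ :=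
            hcrossint.const_mul _
          rw [integral_add hAB hC, integral_add hD2 hB, integral_const_mul, integral_const_mul]
      _ = (∫ ω, D ω ^ 2) + μ ^ 2 * Δt * (∫ ω, uc ω ^ 2) := by
          rw [hcross, hnoise]; ring
  -- Jensen: pointwise bound on D^2
  have hjensen : ∀ ω, D ω ^ 2 ≤
      (1 - a) * uc ω ^ 2 + ∑ i, ρ * Δt * θ i * u i ω ^ 2 := by
    intro ω
    have := Real.pow_arith_mean_le_arith_mean_pow_of_even (Finset.univ : Finset (Option (Fin M)))
      (fun o => Option.elim o (1 - a) (fun i => ρ * Δt * θ i))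
      (fun o => Option.elim o (uc ω) (fun i => u i ω))
      (fun o _ => by
        cases o with
        | none => simpa using sub_nonneg.mpr ha1
        | some i => exact mul_nonneg (mul_nonneg hρ hΔt) (hθ i))
      (by
        rw [Fintype.sum_option]
        simp only [Option.elim]
        rw [← Finset.mul_sum, ← ha]; ring)
      (even_two)
    rw [Fintype.sum_option, Fintype.sum_option] at this
    simp only [Option.elim] at this
    calc D ω ^ 2 = ((1 - a) * uc ω + ∑ i, ρ * Δt * θ i * u i ω) ^ 2 := by
          have : ρ * Δt * ∑ i, θ i * u i ω = ∑ i, ρ * Δt * θ i * u i ω := by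
            rw [Finset.mul_sum]; exact Finset.sum_congr rfl fun i _ => by ring
          simp only [hD, this]
      _ ≤ (1 - a) * uc ω ^ 2 + ∑ i, ρ * Δt * θ i * u i ω ^ 2 := this
  -- integrate Jensen
  have hRHSint : Integrable (fun ω => (1 - a) * uc ω ^ 2 + ∑ i, ρ * Δt * θ i * u i ω ^ 2) ℙ := by
    apply Integrable.add (huc2.const_mul _)
    apply integrable_finset_sum
    intro i _
    exact ((hu i).integrable_sq).const_mul _
  have hD2le : ∫ ω, D ω ^ 2 ≤ (1 - a) * (∫ ω, uc ω ^ 2) + ∑ i, ρ * Δt * θ i * (∫ ω, u i ω ^ 2) := by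
    calc ∫ ω, D ω ^ 2 ≤ ∫ ω, ((1 - a) * uc ω ^ 2 + ∑ i, ρ * Δt * θ i * u i ω ^ 2) :=
          integral_mono hD2 hRHSint hjensen
      _ = (1 - a) * (∫ ω, uc ω ^ 2) + ∑ i, ρ * Δt * θ i * (∫ ω, u i ω ^ 2) := by
          have hA : Integrable (fun ω => (1 - a) * uc ω ^ 2) ℙ := huc2.const_mul _
          have hB : Integrable (fun ω => ∑ i, ρ * Δt * θ i * u i ω ^ 2) ℙ :=
            integrable_finset_sum _ fun i _ => ((hu i).integrable_sq).const_mul _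
          rw [integral_add hA hB, integral_const_mul,
            integral_finset_sum _ fun i _ => ((hu i).integrable_sq).const_mul _]
          congr 1
          exact Finset.sum_congr rfl fun i _ => integral_const_mul _ _
  have hucK : (∫ ω, uc ω ^ 2) ≤ K := le_max_left _ _
  have huiK : ∀ i, (∫ ω, u i ω ^ 2) ≤ K := fun i =>
    le_trans (Finset.le_sup' (fun i => ∫ ω, u i ω ^ 2) (Finset.mem_univ i)) (le_max_right _ _)
  have hD2K : ∫ ω, D ω ^ 2 ≤ K := by
    calc ∫ ω, D ω ^ 2 ≤ (1 - a) * (∫ ω, uc ω ^ 2) + ∑ i, ρ * Δt * θ i * (∫ ω, u i ω ^ 2) := hD2le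
      _ ≤ (1 - a) * K + ∑ i, ρ * Δt * θ i * K := by
          apply add_le_add
          · exact mul_le_mul_of_nonneg_left hucK (sub_nonneg.mpr ha1)
          · apply Finset.sum_le_sum
            intro i _
            exact mul_le_mul_of_nonneg_left (huiK i) (mul_nonneg (mul_nonneg hρ hΔt) (hθ i))
      _ = (1 - a) * K + a * K := by
          congr 1
          rw [← Finset.sum_mul, ha]
          congr 1
          rw [Finset.mul_sum]
      _ = K := by ring
  rw [hint]
  calc (∫ ω, D ω ^ 2) + μ ^ 2 * Δt * (∫ ω, uc ω ^ 2)
      ≤ K + μ ^ 2 * Δt * K := by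
        apply add_le_add hD2K
        exact mul_le_mul_of_nonneg_left hucK (mul_nonneg (sq_nonneg μ) hΔt)
    _ = (1 + μ ^ 2 * Δt) * K := by ring
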